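/- arXiv:1505.01295 — 2 statements merged into one kernel-verified Lean document; each statement's English description precedes it below -/
import Mathlib

section
/- For any partition λ, λ has no hook length divisible by t if and only if the integer t does not appear as a hook length of λ. (A partition with no hook length divisible by t is called a t-core.) -/
open scoped Classical

/-- An integer partition, given by its (0-indexed) sequence of parts. -/
structure IntPartition where
  parts : ℕ → ℕ
  antitone : Antitone parts
  finite_support : (Function.support parts).Finite

namespace IntPartition

/-- The weight `|λ|` of a partition: the sum of its parts. -/
noncomputable def weight (p : IntPartition) : ℕ := p.finite_support.toFinset.sum p.parts

/-- The conjugate partition, as a function: `conj j` is the number of parts `> j`. -/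
noncomputable def conj (p : IntPartition) (j : ℕ) : ℕ := {i | j < p.parts i}.ncard

/-- The cells (boxes) of the Ferrers diagram, 0-indexed. -/
def cells (p : IntPartition) : Set (ℕ × ℕ) := {c | c.2 < p.parts c.1}

lemma cells_finite (p : IntPartition) : p.cells.Finite := by
  have hsub : p.cells ⊆ (Function.support p.parts) ×ˢ (Set.Iio (p.parts 0)) := by
    rintro ⟨i, j⟩ h
    have hj : j < p.parts i := h
    constructor
    · simp only [Function.mem_support]
      omega
    · exact lt_of_lt_of_le hj (p.antitone (Nat.zero_le i))
  exact (p.finite_support.prod (Set.finite_Iio _)).subset hsub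

/-- The cells of the Ferrers diagram as a finset. -/
noncomputable def cellsFinset (p : IntPartition) : Finset (ℕ × ℕ) := p.cells_finite.toFinset

/-- Hook length of the (0-indexed) box `(i,j)`:  `λ_i - j + λ*_j - i - 1` (1-indexed formula). -/
noncomputable def hook (p : IntPartition) (i j : ℕ) : ℕ := p.parts i + p.conj j - i - j - 1

/-- The multiset of hook lengths of all boxes of `p`. -/
noncomputable def hooks (p : IntPartition) : Multiset ℕ :=
  p.cellsFinset.val.map fun c => p.hook c.1 c.2

/-- The Durfee length: the side of the largest square contained in the diagram. -/
noncomputable def durfee (p : IntPartition) : ℕ := {i | i < p.parts i}.ncard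

/-- The sign `δ_λ = (-1)^{D(λ)}`. -/
noncomputable def delta (p : IntPartition) : ℤ := (-1) ^ p.durfee

/-- Self-conjugate partitions: `λ = λ*`. -/
noncomputable def IsSelfConjugate (p : IntPartition) : Prop := ∀ j, p.conj j = p.parts j

/-- Doubled distinct partitions: `λ_i = λ*_i + 1` for `i` in the Durfee square. -/
noncomputable def IsDoubledDistinct (p : IntPartition) : Prop :=
  ∀ i < p.durfee, p.parts i = p.conj i + 1

/-- `t`-cores: partitions with no hook length divisible by `t`. -/
noncomputable def IsCore (t : ℕ) (p : IntPartition) : Prop := ∀ h ∈ p.hooks, ¬ t ∣ h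

/-- The multiset of signed hook lengths `ε_h · h`, where `ε_h = -1` for boxes strictly
above the diagonal and `1` otherwise. -/
noncomputable def signedHooks (p : IntPartition) : Multiset ℤ :=
  p.cellsFinset.val.map fun c => (if c.1 < c.2 then -1 else 1) * (p.hook c.1 c.2 : ℤ)

/-- The multiset of signed hook lengths `ε_h · h` over boxes whose hook length is a
multiple of `t`. -/
noncomputable def signedHooksT (t : ℕ) (p : IntPartition) : Multiset ℤ :=
  (p.cellsFinset.filter fun c => t ∣ p.hook c.1 c.2).val.map
    fun c => (if c.1 < c.2 then -1 else 1) * (p.hook c.1 c.2 : ℤ)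

/-- The multiset of principal hook lengths (hooks of diagonal boxes). -/
noncomputable def principalHooks (p : IntPartition) : Multiset ℕ :=
  (Finset.range p.durfee).val.map fun i => p.hook i i

lemma conj_set_finite (p : IntPartition) (j : ℕ) : {i | j < p.parts i}.Finite := by
  apply p.finite_support.subset
  intro i hi
  simp only [Set.mem_setOf_eq] at hi
  simp only [Function.mem_support]
  omega

/-- The conjugate partition, as a `Partition`. -/
noncomputable def conjugate (p : IntPartition) : IntPartition where
  parts := p.conj
  antitone := fun a b hab =>
    Set.ncard_le_ncard (fun i hi => lt_of_le_of_lt hab hi) (p.conj_set_finite a)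
  finite_support := by
    apply (Set.finite_Iio (p.parts 0)).subset
    intro j hj
    obtain ⟨i, hi⟩ := Set.nonempty_of_ncard_ne_zero hj
    exact lt_of_lt_of_le hi (p.antitone (Nat.zero_le i))

end IntPartition

/-- "Infinite" product `∏_{k ≥ 1} f k` of power series, defined coefficientwise;
this is the honest infinite product whenever `f k ≡ 1 mod X^k`. -/
noncomputable def Pinf {R : Type*} [CommRing R] (f : ℕ → PowerSeries R) : PowerSeries R :=
  PowerSeries.mk fun n => PowerSeries.coeff (R := R) n (∏ k ∈ Finset.range (n + 1), f (k + 1))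

/-- The Euler-type product `E R m = ∏_{k ≥ 1} (1 - x^{m k}) = (q^m; q^m)_∞`. -/
noncomputable def E (R : Type*) [CommRing R] (m : ℕ) : PowerSeries R :=
  Pinf fun k => 1 - PowerSeries.X ^ (m * k)

/-- The binomial series `(1 - x^m)^a` for an exponent `a` in a binomial ring. -/
noncomputable def binomSeries {R : Type*} [CommRing R] [BinomialRing R] (a : R) (m : ℕ) :
    PowerSeries R :=
  PowerSeries.mk fun n => if m ∣ n then (-1) ^ (n / m) * Ring.choose a (n / m) else 0

/-- `m` is the position of a vertical step (a `0`) in the canonical bi-infinite binary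
word of the partition `p`. -/
def zeroPos (p : IntPartition) (m : ℤ) : Prop := ∃ i : ℕ, (p.parts i : ℤ) - i - 1 = m

/-- The Littlewood decomposition, as a relation: `core` and `quot` are the `t`-core and
`t`-quotient of `lam`, expressed via the binary-word encoding: the `k`-th subsequence of
the word of `lam` is the word of `quot k` (up to the shift `s k`), and the `k`-th
subsequence of the word of `core` is the corresponding flushed word `...000111...` with
the same charge. -/
def IsLittlewood (t : ℕ) (lam core : IntPartition) (quot : ℕ → IntPartition) : Prop :=
  ∃ s : ℕ → ℤ,
    (∀ k < t, ∀ j : ℤ, zeroPos (quot k) j ↔ zeroPos lam (t * (j + s k) + k)) ∧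
    (∀ k < t, ∀ j : ℤ, zeroPos core (t * (j + s k) + k) ↔ j < 0)

namespace CoreAux

/-- Beta numbers (positions of zeros in the binary word). -/
noncomputable def b (p : IntPartition) (i : ℕ) : ℤ := (p.parts i : ℤ) - i - 1

/-- Positions of ones in the binary word. -/
noncomputable def c (p : IntPartition) (j : ℕ) : ℤ := (j : ℤ) - p.conj j

lemma ncard_Iio (n : ℕ) : (Set.Iio n).ncard = n := by
  rw [← Finset.coe_range, Set.ncard_coe_finset, Finset.card_range]

lemma mono1 (p : IntPartition) {i j : ℕ} (h : j < p.parts i) : i < p.conj j := by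
  have hsub : Set.Iio (i + 1) ⊆ {i' | j < p.parts i'} := fun i' hi' =>
    lt_of_lt_of_le h (p.antitone (Nat.lt_succ_iff.mp hi'))
  have := Set.ncard_le_ncard hsub (p.conj_set_finite j)
  rw [ncard_Iio] at this
  unfold IntPartition.conj
  omega

lemma mono2 (p : IntPartition) {i j : ℕ} (h : p.parts i ≤ j) : p.conj j ≤ i := by
  have hsub : {i' | j < p.parts i'} ⊆ Set.Iio i := by
    intro i' hi'
    simp only [Set.mem_setOf_eq] at hi'
    simp only [Set.mem_Iio]
    by_contra h2
    push_neg at h2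
    have := p.antitone h2
    omega
  have := Set.ncard_le_ncard hsub (Set.finite_Iio i)
  rw [ncard_Iio] at this
  unfold IntPartition.conj
  omega

lemma hook_eq (p : IntPartition) {i j : ℕ} (h : j < p.parts i) :
    (p.hook i j : ℤ) = b p i - c p j := by
  have h1 := mono1 p h
  unfold IntPartition.hook b c
  omega

lemma cell_iff (p : IntPartition) (i j : ℕ) : j < p.parts i ↔ c p j < b p i := by
  constructor
  · intro h
    have h1 := mono1 p h
    unfold b c
    omega
  · intro h
    by_contra h2
    push_neg at h2
    have h1 := mono2 p h2
    unfold b c at h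
    omega

lemma b_ne_c (p : IntPartition) (i j : ℕ) : b p i ≠ c p j := by
  rcases lt_or_ge j (p.parts i) with h | h
  · have := (cell_iff p i j).mp h
    omega
  · have h1 := mono2 p h
    unfold b c
    omega

lemma b_le (p : IntPartition) : ∀ d i, b p (i + d) + d ≤ b p i := by
  intro d
  induction d with
  | zero => intro i; simp
  | succ n ih =>
    intro i
    have h1 : i + (n + 1) = (i + n) + 1 := by omega
    rw [h1]
    have h2 := ih i
    have h3 : p.parts ((i + n) + 1) ≤ p.parts (i + n) := p.antitone (by omega)
    unfold b at *
    push_cast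
    omega

lemma exists_c (p : IntPartition) (m : ℤ) (hB : ∀ i, b p i ≠ m) : ∃ j, c p j = m := by
  have hex : ∃ n, b p n ≤ m := by
    refine ⟨p.parts 0 + m.natAbs, ?_⟩
    have := p.antitone (Nat.zero_le (p.parts 0 + m.natAbs))
    unfold b
    omega
  have hn1 : b p (Nat.find hex) ≤ m := Nat.find_spec hex
  set n := Nat.find hex with hn
  have hlt : ∀ i < n, m < b p i := by
    intro i hi
    have := Nat.find_min hex hi
    omega
  have hge : ∀ i, n ≤ i → (p.parts i : ℤ) ≤ m + n := by
    intro i hi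
    have h1 := b_le p (i - n) n
    rw [show n + (i - n) = i from by omega] at h1
    have h2 := hB n
    unfold b at h1 hn1 h2
    omega
  have hlt' : ∀ i < n, m + (n : ℤ) < p.parts i := by
    intro i hi
    have h1 := b_le p (n - 1 - i) i
    rw [show i + (n - 1 - i) = n - 1 from by omega] at h1
    have h2 := hlt (n - 1) (by omega)
    unfold b at h1 h2
    omega
  have hnm : 0 ≤ m + n := by
    by_contra hneg
    push_neg at hneg
    have hi : n ≤ (-m - 1).toNat := by omega
    have := hge _ hi
    have : (0 : ℤ) ≤ p.parts ((-m - 1).toNat) := Int.natCast_nonneg _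
    omega
  refine ⟨(m + n).toNat, ?_⟩
  have hconj : p.conj ((m + n).toNat) = n := by
    have hset : {i | (m + n).toNat < p.parts i} = Set.Iio n := by
      ext i
      simp only [Set.mem_setOf_eq, Set.mem_Iio]
      constructor
      · intro h
        by_contra h2
        push_neg at h2
        have := hge i h2
        omega
      · intro h
        have := hlt' i h
        omega
    unfold IntPartition.conj
    rw [hset, ncard_Iio]
  unfold c
  rw [hconj]
  omega

lemma mem_hooks_iff (p : IntPartition) (h : ℕ) :
    h ∈ p.hooks ↔ ∃ i j, j < p.parts i ∧ p.hook i j = h := by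
  unfold IntPartition.hooks IntPartition.cellsFinset
  rw [Multiset.mem_map]
  constructor
  · rintro ⟨⟨i, j⟩, hc, hh⟩
    rw [← Finset.mem_def, Set.Finite.mem_toFinset] at hc
    exact ⟨i, j, hc, hh⟩
  · rintro ⟨i, j, hc, hh⟩
    exact ⟨(i, j), by rw [← Finset.mem_def, Set.Finite.mem_toFinset]; exact hc, hh⟩

end CoreAux

theorem core_iff_no_hook_t (t : ℕ) (ht : 0 < t) (p : IntPartition) :
    (∀ h ∈ p.hooks, ¬ t ∣ h) ↔ t ∉ p.hooks := by
  constructor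
  · intro H ht'
    exact H t ht' dvd_rfl
  · intro H h hmem hdvd
    apply H
    obtain ⟨i, j, hcell, hh⟩ := (CoreAux.mem_hooks_iff p h).mp hmem
    -- hook length as integer
    have hhook := CoreAux.hook_eq p hcell
    rw [hh] at hhook
    have hpos : 0 < h := by
      have h1 := CoreAux.mono1 p hcell
      rw [← hh]
      unfold IntPartition.hook
      omega
    obtain ⟨k, hk⟩ := hdvd
    have hk1 : 1 ≤ k := by
      rcases Nat.eq_zero_or_pos k with h0 | h0
      · rw [h0, Nat.mul_zero] at hk
        omega
      · omega
    -- the set of multiplicities k' with c p j + k' * t a beta number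
    have hex : ∃ k' : ℕ, ∃ i', CoreAux.b p i' = CoreAux.c p j + k' * t := by
      refine ⟨k, i, ?_⟩
      have : (h : ℤ) = (k : ℤ) * t := by push_cast [hk]; ring
      omega
    set kmin := Nat.find hex with hkmin
    obtain ⟨i', hi'⟩ := Nat.find_spec hex
    have hkpos : 1 ≤ kmin := by
      by_contra h0
      push_neg at h0
      have h0' : kmin = 0 := by omega
      rw [hkmin] at h0'
      rw [h0'] at hi'
      simp only [Nat.cast_zero, zero_mul, add_zero] at hi'
      exact CoreAux.b_ne_c p i' j hi'
    have hmin : ∀ i'', CoreAux.b p i'' ≠ CoreAux.c p j + (kmin - 1 : ℕ) * t := by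
      intro i'' heq
      exact Nat.find_min hex (by omega) ⟨i'', heq⟩
    obtain ⟨j', hj'⟩ := CoreAux.exists_c p _ hmin
    have hdiff : CoreAux.b p i' - CoreAux.c p j' = (t : ℤ) := by
      rw [hi', hj']
      have : ((kmin - 1 : ℕ) : ℤ) = (kmin : ℤ) - 1 := by omega
      rw [this]
      ring
    have hcell' : j' < p.parts i' := by
      rw [CoreAux.cell_iff]
      omega
    refine (CoreAux.mem_hooks_iff p t).mpr ⟨i', j', hcell', ?_⟩
    have := CoreAux.hook_eq p hcell'
    omega
end

section
/- Sign multiplicativity under Littlewood decomposition: let t = 2t'+1 be odd, λ a doubled distinct partition with Littlewood decomposition (λ̃, λ⁰, λ¹, ..., λ^{t-1}). Then δ_λ = δ_{λ̃} · δ_{λ⁰}, i.e., (-1)^{D(λ)} = (-1)^{D(λ̃)} · (-1)^{D(λ⁰)}. -/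
open scoped Classical

namespace LWAux

open IntPartition

/-! ### Basic facts about the beta set (first-column hook lengths) -/

lemma exists_bound (p : IntPartition) : ∃ N : ℕ, ∀ i, N ≤ i → p.parts i = 0 := by
  obtain ⟨N, hN⟩ := p.finite_support.bddAbove
  refine ⟨N + 1, fun i hi => ?_⟩
  by_contra h
  have := hN (Function.mem_support.2 h)
  omega

/-- The beta function of a partition: `β i = λ_i - i - 1`. -/
noncomputable def bt (p : IntPartition) (i : ℕ) : ℤ := (p.parts i : ℤ) - i - 1

lemma bt_anti (p : IntPartition) {i j : ℕ} (hij : i < j) : bt p j < bt p i := by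
  have h : p.parts j ≤ p.parts i := p.antitone hij.le
  simp only [bt]
  have h2 : (p.parts j : ℤ) ≤ p.parts i := by exact_mod_cast h
  have h3 : (i : ℤ) < j := by exact_mod_cast hij
  omega

lemma bt_mono (p : IntPartition) {i j : ℕ} (hij : i ≤ j) : bt p j ≤ bt p i := by
  rcases eq_or_lt_of_le hij with rfl | h
  · exact le_refl _
  · exact (bt_anti p h).le

lemma bt_inj (p : IntPartition) : Function.Injective (bt p) := by
  intro a b hab
  rcases lt_trichotomy a b with h | h | h
  · exact absurd hab (bt_anti p h).ne'
  · exact h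
  · exact absurd hab (bt_anti p h).ne

lemma zeroPos_iff (p : IntPartition) (m : ℤ) : zeroPos p m ↔ ∃ i, bt p i = m := Iff.rfl

/-- Initial-segment lemma for finite downward closed sets of naturals. -/
lemma seg_mem_iff {S : Set ℕ} (hf : S.Finite)
    (hdc : ∀ {i j : ℕ}, i ≤ j → j ∈ S → i ∈ S) (i : ℕ) :
    i ∈ S ↔ i < S.ncard := by
  constructor
  · intro hi
    have hsub : Set.Iic i ⊆ S := fun m hm => hdc hm hi
    have h1 := Set.ncard_le_ncard hsub hf
    have hI : (Set.Iic i).ncard = i + 1 := by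
      rw [← Finset.coe_Iic, Set.ncard_coe_finset, Nat.card_Iic]
    omega
  · intro hi
    by_contra h
    have hsub : S ⊆ Set.Iio i := by
      intro m hm
      simp only [Set.mem_Iio]
      by_contra hm2
      push_neg at hm2
      exact h (hdc hm2 hm)
    have h1 := Set.ncard_le_ncard hsub (Set.finite_Iio i)
    have hI : (Set.Iio i).ncard = i := by
      rw [← Finset.coe_range, Set.ncard_coe_finset, Finset.card_range]
    omega

lemma ncard_eq_of_iff {S : Set ℕ} {M : ℕ} (h : ∀ i, i ∈ S ↔ i < M) : S.ncard = M := by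
  have hS : S = Set.Iio M := Set.ext fun i => (h i).trans (Set.mem_Iio).symm
  rw [hS, ← Finset.coe_range, Set.ncard_coe_finset, Finset.card_range]

/-! ### The counting functions `zc` and `oc` -/

/-- `Ys p c` is the set of rows with `β i ≥ c`. -/
def Ys (p : IntPartition) (c : ℤ) : Set ℕ := {i | c ≤ bt p i}

noncomputable def zc (p : IntPartition) (c : ℤ) : ℕ := (Ys p c).ncard

lemma Ys_finite (p : IntPartition) (c : ℤ) : (Ys p c).Finite := by
  obtain ⟨N, hN⟩ := exists_bound p
  apply (Set.finite_Iic (max N (-c-1).toNat)).subset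
  intro i hi
  simp only [Ys, Set.mem_setOf_eq, bt] at hi
  simp only [Set.mem_Iic]
  by_contra h
  push_neg at h
  have hiN : N ≤ i := le_trans (le_max_left _ _) h.le
  rw [hN i hiN] at hi
  have h2 := le_trans (le_max_right N (-c-1).toNat) h.le
  push_cast at hi
  omega

lemma mem_Ys_iff (p : IntPartition) (c : ℤ) (i : ℕ) : c ≤ bt p i ↔ i < zc p c :=
  seg_mem_iff (Ys_finite p c) (fun hab hb => le_trans hb (bt_mono p hab)) i

/-- The zero positions `≥ c`. -/
def Zs (p : IntPartition) (c : ℤ) : Set ℤ := {m | c ≤ m ∧ zeroPos p m}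

lemma Zs_eq_image (p : IntPartition) (c : ℤ) : Zs p c = bt p '' (Ys p c) := by
  ext m
  simp only [Zs, Ys, Set.mem_setOf_eq, Set.mem_image]
  constructor
  · rintro ⟨h1, i, hi⟩
    exact ⟨i, by rw [show bt p i = m from hi]; exact h1, hi⟩
  · rintro ⟨i, hi, rfl⟩
    exact ⟨hi, ⟨i, rfl⟩⟩

lemma Zs_finite (p : IntPartition) (c : ℤ) : (Zs p c).Finite := by
  rw [Zs_eq_image]; exact (Ys_finite p c).image _

lemma ncard_Zs (p : IntPartition) (c : ℤ) : (Zs p c).ncard = zc p c := by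
  rw [Zs_eq_image, Set.ncard_image_of_injective _ (bt_inj p)]
  rfl

lemma zc_eq_of_iff (p : IntPartition) (c : ℤ) (M : ℕ) (h : ∀ i, c ≤ bt p i ↔ i < M) :
    zc p c = M := ncard_eq_of_iff h

/-- The non-zero positions `< c`. -/
def Os (p : IntPartition) (c : ℤ) : Set ℤ := {m | m < c ∧ ¬ zeroPos p m}

noncomputable def oc (p : IntPartition) (c : ℤ) : ℕ := (Os p c).ncard

lemma Os_finite (p : IntPartition) (c : ℤ) : (Os p c).Finite := by
  obtain ⟨N, hN⟩ := exists_bound p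
  apply (Set.finite_Ico (-(N:ℤ)-1) c).subset
  rintro m ⟨hm, hz⟩
  simp only [Set.mem_Ico]
  refine ⟨?_, hm⟩
  by_contra h
  push_neg at h
  apply hz
  refine ⟨(-m-1).toNat, ?_⟩
  rw [hN _ (by omega)]
  push_cast
  omega

lemma Zs_step (p : IntPartition) (c : ℤ) :
    zc p c = zc p (c+1) + (if zeroPos p c then 1 else 0) := by
  rw [← ncard_Zs, ← ncard_Zs]
  by_cases h : zeroPos p c
  · rw [if_pos h]
    have hins : Zs p c = insert c (Zs p (c+1)) := by
      ext m
      simp only [Zs, Set.mem_insert_iff, Set.mem_setOf_eq]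
      constructor
      · rintro ⟨h1, h2⟩
        rcases eq_or_lt_of_le h1 with rfl | h3
        · exact Or.inl rfl
        · exact Or.inr ⟨by omega, h2⟩
      · rintro (rfl | ⟨h1, h2⟩)
        · exact ⟨le_refl _, h⟩
        · exact ⟨by omega, h2⟩
    rw [hins, Set.ncard_insert_of_notMem (by simp [Zs]) (Zs_finite p (c+1))]
  · rw [if_neg h, add_zero]
    congr 1
    ext m
    simp only [Zs, Set.mem_setOf_eq]
    constructor
    · rintro ⟨h1, h2⟩
      refine ⟨?_, h2⟩
      rcases eq_or_lt_of_le h1 with rfl | h3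
      · exact absurd h2 h
      · omega
    · rintro ⟨h1, h2⟩
      exact ⟨by omega, h2⟩

lemma Os_step (p : IntPartition) (c : ℤ) :
    oc p (c+1) = oc p c + (if zeroPos p c then 0 else 1) := by
  unfold oc
  by_cases h : zeroPos p c
  · rw [if_pos h, add_zero]
    congr 1
    ext m
    simp only [Os, Set.mem_setOf_eq]
    constructor
    · rintro ⟨h1, h2⟩
      refine ⟨?_, h2⟩
      by_cases hm : m = c
      · exact absurd (hm ▸ h) h2
      · omega
    · rintro ⟨h1, h2⟩
      exact ⟨by omega, h2⟩
  · rw [if_neg h]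
    have hins : Os p (c+1) = insert c (Os p c) := by
      ext m
      simp only [Os, Set.mem_insert_iff, Set.mem_setOf_eq]
      constructor
      · rintro ⟨h1, h2⟩
        by_cases hm : m = c
        · exact Or.inl hm
        · exact Or.inr ⟨by omega, h2⟩
      · rintro (rfl | ⟨h1, h2⟩)
        · exact ⟨by omega, h⟩
        · exact ⟨by omega, h2⟩
    rw [hins, Set.ncard_insert_of_notMem (by simp [Os]) (Os_finite p c)]

lemma zc_succ_le (p : IntPartition) (c : ℤ) : zc p (c+1) ≤ zc p c := by
  have := Zs_step p c
  by_cases h : zeroPos p c <;> simp [h] at this <;> omega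

lemma zeroPos_iff_zc (p : IntPartition) (m : ℤ) : zeroPos p m ↔ zc p m = zc p (m+1) + 1 := by
  have := Zs_step p m
  by_cases h : zeroPos p m <;> simp [h] at this <;> simp [h] <;> omega

lemma const_of_step {f : ℤ → ℤ} (h : ∀ c, f c = f (c+1)) (a b : ℤ) : f a = f b := by
  have key : ∀ (x : ℤ) (n : ℕ), f x = f (x + n) := by
    intro x n
    induction n with
    | zero => simp
    | succ n ih =>
      rw [ih, h (x + n)]
      congr 1
      push_cast
      ring
  rcases le_total a b with hab | hab
  · have := key a (b - a).toNat
    rwa [show a + ((b-a).toNat : ℤ) = b by omega] at this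
  · have := key b (a - b).toNat
    rw [show b + ((a-b).toNat : ℤ) = a by omega] at this
    exact this.symm

/-- The charge identity: `oc p c = zc p c + c`. -/
lemma charge (p : IntPartition) (c : ℤ) : (oc p c : ℤ) = (zc p c : ℤ) + c := by
  obtain ⟨N, hN⟩ := exists_bound p
  have base_oc : oc p (-(N:ℤ)-1) = 0 := by
    unfold oc
    rw [Set.ncard_eq_zero (Os_finite p _)]
    ext m
    simp only [Os, Set.mem_setOf_eq, Set.mem_empty_iff_false, iff_false, not_and, not_not]
    intro hm
    refine ⟨(-m-1).toNat, ?_⟩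
    rw [hN _ (by omega)]
    push_cast
    omega
  have base_zc : zc p (-(N:ℤ)-1) = N + 1 := by
    unfold zc
    apply ncard_eq_of_iff
    intro i
    simp only [Ys, Set.mem_setOf_eq, bt]
    constructor
    · intro h
      by_contra hc
      push_neg at hc
      rw [hN i (by omega)] at h
      push_cast at h
      omega
    · intro h
      have : (0:ℤ) ≤ p.parts i := by positivity
      omega
  have hstep : ∀ d : ℤ, (fun d => (oc p d : ℤ) - (zc p d : ℤ) - d) d
      = (fun d => (oc p d : ℤ) - (zc p d : ℤ) - d) (d+1) := by
    intro d
    simp only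
    have h1 := Zs_step p d
    have h2 := Os_step p d
    by_cases h : zeroPos p d
    · rw [if_pos h] at h1 h2; omega
    · rw [if_neg h] at h1 h2; omega
  have hconst := const_of_step hstep c (-(N:ℤ)-1)
  rw [base_oc, base_zc] at hconst
  push_cast at hconst
  omega

/-! ### Conjugation: Galois connection and complementation of the binary word -/

lemma galois (p : IntPartition) (i j : ℕ) : i < p.conj j ↔ j < p.parts i := by
  have hf := p.conj_set_finite j
  have h := seg_mem_iff (S := {i | j < p.parts i}) hf
    (fun hab hb => lt_of_lt_of_le hb (p.antitone hab)) i
  simpa [IntPartition.conj] using h.symm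

lemma conj_conjugate (p : IntPartition) (i : ℕ) : p.conjugate.conj i = p.parts i := by
  have hset : {j | i < p.conjugate.parts j} = Set.Iio (p.parts i) := by
    ext j
    simp only [Set.mem_setOf_eq, Set.mem_Iio]
    exact galois p i j
  show {j | i < p.conjugate.parts j}.ncard = p.parts i
  rw [hset, ← Finset.coe_range, Set.ncard_coe_finset, Finset.card_range]

lemma zeroPos_conj_conj (p : IntPartition) (m : ℤ) :
    zeroPos p.conjugate.conjugate m ↔ zeroPos p m := by
  unfold zeroPos
  have he : ∀ i, p.conjugate.conjugate.parts i = p.parts i := fun i => conj_conjugate p i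
  constructor <;> rintro ⟨i, hi⟩ <;> refine ⟨i, ?_⟩
  · rw [← he i]; exact hi
  · rw [he i]; exact hi

lemma zc_conj (p : IntPartition) (n : ℕ) : zc p.conjugate (-(n:ℤ)) = n + zc p n := by
  apply zc_eq_of_iff
  intro j
  have hb : bt p.conjugate j = (p.conj j : ℤ) - j - 1 := rfl
  rw [hb]
  by_cases hj : j < n
  · constructor
    · intro _; omega
    · intro _
      have : (0:ℤ) ≤ p.conj j := by positivity
      omega
  · push_neg at hj
    set i := j - n with hidef
    have hji : j = n + i := by omega
    have h1 : (-(n:ℤ) ≤ (p.conj j : ℤ) - j - 1) ↔ i < p.conj j := by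
      constructor <;> intro h <;> omega
    have h2 : i < p.conj j ↔ j < p.parts i := galois p i j
    have h3 : j < p.parts i ↔ (n:ℤ) ≤ bt p i := by
      simp only [bt]
      constructor <;> intro h
      · have : (j:ℤ) < p.parts i := by exact_mod_cast h
        omega
      · have : (j:ℤ) < p.parts i := by omega
        exact_mod_cast this
    have h4 := mem_Ys_iff p (n:ℤ) i
    rw [h1, h2, h3, h4]
    omega

lemma compl_nat (p : IntPartition) (n : ℕ) :
    zeroPos p.conjugate (-1 - (n:ℤ)) ↔ ¬ zeroPos p (n:ℤ) := by
  have e1 : (-1 - (n:ℤ)) + 1 = -(n:ℤ) := by ring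
  have e2 : -1 - (n:ℤ) = -(((n+1 : ℕ)):ℤ) := by push_cast; ring
  have h1 := zeroPos_iff_zc p.conjugate (-1 - (n:ℤ))
  rw [e1] at h1
  have h2 := zc_conj p n
  have h3 := zc_conj p (n+1)
  rw [← e2] at h3
  have h4 := zeroPos_iff_zc p (n:ℤ)
  have e4 : ((n:ℤ)+1) = (((n+1:ℕ)):ℤ) := by push_cast; ring
  rw [e4] at h4
  have h5 : zc p (((n+1:ℕ)):ℤ) ≤ zc p (n:ℤ) := by
    have := zc_succ_le p (n:ℤ)
    rwa [e4] at this
  have h6 : zc p (n:ℤ) ≤ zc p (((n+1:ℕ)):ℤ) + 1 := by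
    have h7 := Zs_step p (n:ℤ)
    rw [e4] at h7
    split_ifs at h7 <;> omega
  rw [h1, h4]
  omega

lemma compl (p : IntPartition) (m : ℤ) : zeroPos p.conjugate (-1 - m) ↔ ¬ zeroPos p m := by
  rcases le_or_gt 0 m with h | h
  · obtain ⟨n, rfl⟩ : ∃ n : ℕ, m = (n:ℤ) := ⟨m.toNat, (Int.toNat_of_nonneg h).symm⟩
    exact compl_nat p n
  · obtain ⟨n, hn⟩ : ∃ n : ℕ, -1 - m = (n:ℤ) := ⟨(-1-m).toNat, (Int.toNat_of_nonneg (by omega)).symm⟩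
    have h2 := compl_nat p.conjugate n
    rw [show (-1 - (n:ℤ)) = m by omega] at h2
    rw [zeroPos_conj_conj] at h2
    rw [hn]
    tauto

/-! ### Durfee length and the doubled-distinct symmetry -/

lemma durfee_eq_zc (p : IntPartition) : p.durfee = zc p 0 := by
  have hset : {i : ℕ | i < p.parts i} = Ys p 0 := by
    ext i
    simp only [Ys, Set.mem_setOf_eq, bt]
    omega
  rw [IntPartition.durfee, hset, zc]

lemma dd_not_zero (p : IntPartition) (hdd : p.IsDoubledDistinct) : ¬ zeroPos p 0 := by
  rintro ⟨i, hi⟩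
  have hpi : p.parts i = i + 1 := by omega
  have hlt : i < p.durfee := by
    rw [durfee_eq_zc, ← mem_Ys_iff]
    simp only [bt]
    omega
  have hd := hdd i hlt
  have hg := (galois p i i).mpr (by omega)
  omega

lemma dd_symm_pos (p : IntPartition) (hdd : p.IsDoubledDistinct) (m : ℤ) (hm : 1 ≤ m) :
    zeroPos p m ↔ ¬ zeroPos p (-m) := by
  have hc := compl p (-m)
  rw [show (-1 - (-m)) = m - 1 by ring] at hc
  rw [← hc]
  constructor
  · rintro ⟨i, hi⟩
    have hpi : (p.parts i : ℤ) = m + i + 1 := by omega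
    have hlt : i < p.durfee := by
      rw [durfee_eq_zc, ← mem_Ys_iff]
      simp only [bt]
      omega
    have hd := hdd i hlt
    refine ⟨i, ?_⟩
    show (p.conj i : ℤ) - i - 1 = m - 1
    omega
  · rintro ⟨j, hj⟩
    have hj' : (p.conj j : ℤ) - j - 1 = m - 1 := hj
    have hjj : j < p.conj j := by omega
    have hpj : j < p.parts j := (galois p j j).mp hjj
    have hlt : j < p.durfee := by
      rw [durfee_eq_zc, ← mem_Ys_iff]
      simp only [bt]
      omega
    have hd := hdd j hlt
    exact ⟨j, by omega⟩

lemma dd_symm (p : IntPartition) (hdd : p.IsDoubledDistinct) (m : ℤ) (hm : m ≠ 0) :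
    zeroPos p m ↔ ¬ zeroPos p (-m) := by
  rcases lt_or_gt_of_ne hm with h | h
  · have h2 := dd_symm_pos p hdd (-m) (by omega)
    rw [neg_neg] at h2
    tauto
  · exact dd_symm_pos p hdd m (by omega)

end LWAux
namespace LWAux

open IntPartition

/-! ### Reflection and the shift-determination lemmas -/

lemma reflect_ncard (e : ℤ) (S : Set ℤ) : ((fun j => e - j) '' S).ncard = S.ncard :=
  Set.ncard_image_of_injective S (fun a b h => sub_right_injective h)

lemma mem_reflect (e : ℤ) (S : Set ℤ) (m : ℤ) :
    m ∈ (fun j => e - j) '' S ↔ e - m ∈ S := by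
  constructor
  · rintro ⟨j, hj, rfl⟩
    simpa using hj
  · intro h
    exact ⟨e - m, h, by ring⟩

lemma shift_eq (q q' : IntPartition) (c : ℤ)
    (h : ∀ j : ℤ, zeroPos q' j ↔ ¬ zeroPos q (c - j)) : c = -1 := by
  have h1 : zc q' 0 = oc q (c+1) := by
    have himg : (fun j => c - j) '' (Zs q' 0) = Os q (c+1) := by
      ext m
      rw [mem_reflect]
      simp only [Zs, Os, Set.mem_setOf_eq]
      rw [h (c - m), show c - (c - m) = m by ring]
      constructor <;> rintro ⟨u, v⟩ <;> exact ⟨by omega, v⟩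
    calc zc q' 0 = (Zs q' 0).ncard := (ncard_Zs _ _).symm
      _ = ((fun j => c - j) '' (Zs q' 0)).ncard := (reflect_ncard _ _).symm
      _ = oc q (c+1) := by rw [himg]; rfl
  have h2 : oc q' 0 = zc q (c+1) := by
    have himg : (fun j => c - j) '' (Os q' 0) = Zs q (c+1) := by
      ext m
      rw [mem_reflect]
      simp only [Zs, Os, Set.mem_setOf_eq]
      rw [h (c - m), show c - (c - m) = m by ring, not_not]
      constructor <;> rintro ⟨u, v⟩ <;> exact ⟨by omega, v⟩
    calc oc q' 0 = (Os q' 0).ncard := rfl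
      _ = ((fun j => c - j) '' (Os q' 0)).ncard := (reflect_ncard _ _).symm
      _ = (Zs q (c+1)).ncard := by rw [himg]
      _ = zc q (c+1) := ncard_Zs _ _
  have c1 := charge q' 0
  have c2 := charge q (c+1)
  omega

lemma shift_eq' (q q' : IntPartition) (c j₀ : ℤ)
    (h : ∀ j : ℤ, j ≠ j₀ → (zeroPos q' j ↔ ¬ zeroPos q (c - j)))
    (h0 : ¬ zeroPos q' j₀) (h0' : ¬ zeroPos q (c - j₀)) : c = 0 := by
  have c1 := charge q' 0
  have c2 := charge q (c+1)
  by_cases hj : 0 ≤ j₀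
  · -- the extra point sits on the nonnegative side
    have hS : {j : ℤ | 0 ≤ j ∧ ¬ zeroPos q (c - j)} = insert j₀ (Zs q' 0) := by
      ext j
      simp only [Set.mem_setOf_eq, Set.mem_insert_iff, Zs]
      constructor
      · rintro ⟨u, v⟩
        by_cases hjj : j = j₀
        · exact Or.inl hjj
        · exact Or.inr ⟨u, (h j hjj).mpr v⟩
      · rintro (rfl | ⟨u, v⟩)
        · exact ⟨hj, h0'⟩
        · refine ⟨u, ?_⟩
          have hjj : j ≠ j₀ := fun hh => h0 (hh ▸ v)
          exact (h j hjj).mp v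
    have hS2 : (fun j => c - j) '' {j : ℤ | 0 ≤ j ∧ ¬ zeroPos q (c - j)} = Os q (c+1) := by
      ext m
      rw [mem_reflect]
      simp only [Set.mem_setOf_eq, Os, show c - (c - m) = m by ring]
      constructor <;> rintro ⟨u, v⟩ <;> exact ⟨by omega, v⟩
    have hcount : oc q (c+1) = zc q' 0 + 1 := by
      have h9 : ({j : ℤ | 0 ≤ j ∧ ¬ zeroPos q (c - j)}).ncard = zc q' 0 + 1 := by
        rw [hS, Set.ncard_insert_of_notMem (by simp [Zs, h0]) (Zs_finite q' 0), ncard_Zs]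
      rw [show oc q (c+1) = (Os q (c+1)).ncard from rfl, ← hS2, reflect_ncard]
      exact h9
    have hT : Os q' 0 = {j : ℤ | j < 0 ∧ zeroPos q (c - j)} := by
      ext j
      simp only [Os, Set.mem_setOf_eq]
      constructor
      · rintro ⟨u, v⟩
        have hjj : j ≠ j₀ := by omega
        refine ⟨u, ?_⟩
        by_contra h3
        exact v ((h j hjj).mpr h3)
      · rintro ⟨u, v⟩
        have hjj : j ≠ j₀ := by omega
        exact ⟨u, fun hz => ((h j hjj).mp hz) v⟩
    have hT2 : (fun j => c - j) '' {j : ℤ | j < 0 ∧ zeroPos q (c - j)} = Zs q (c+1) := by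
      ext m
      rw [mem_reflect]
      simp only [Set.mem_setOf_eq, Zs, show c - (c - m) = m by ring]
      constructor <;> rintro ⟨u, v⟩ <;> exact ⟨by omega, v⟩
    have hcount2 : oc q' 0 = zc q (c+1) := by
      show (Os q' 0).ncard = zc q (c+1)
      rw [hT, ← reflect_ncard c, hT2, ncard_Zs]
    omega
  · push_neg at hj
    have hS : {j : ℤ | 0 ≤ j ∧ ¬ zeroPos q (c - j)} = Zs q' 0 := by
      ext j
      simp only [Set.mem_setOf_eq, Zs]
      constructor
      · rintro ⟨u, v⟩
        have hjj : j ≠ j₀ := by omega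
        exact ⟨u, (h j hjj).mpr v⟩
      · rintro ⟨u, v⟩
        have hjj : j ≠ j₀ := by omega
        exact ⟨u, (h j hjj).mp v⟩
    have hS2 : (fun j => c - j) '' {j : ℤ | 0 ≤ j ∧ ¬ zeroPos q (c - j)} = Os q (c+1) := by
      ext m
      rw [mem_reflect]
      simp only [Set.mem_setOf_eq, Os, show c - (c - m) = m by ring]
      constructor <;> rintro ⟨u, v⟩ <;> exact ⟨by omega, v⟩
    have hcount : oc q (c+1) = zc q' 0 := by
      have h9 : ({j : ℤ | 0 ≤ j ∧ ¬ zeroPos q (c - j)}).ncard = zc q' 0 := by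
        rw [hS, ncard_Zs]
      rw [show oc q (c+1) = (Os q (c+1)).ncard from rfl, ← hS2, reflect_ncard]
      exact h9
    have hT : Os q' 0 = insert j₀ {j : ℤ | j < 0 ∧ zeroPos q (c - j)} := by
      ext j
      simp only [Os, Set.mem_setOf_eq, Set.mem_insert_iff]
      constructor
      · rintro ⟨u, v⟩
        by_cases hjj : j = j₀
        · exact Or.inl hjj
        · refine Or.inr ⟨u, ?_⟩
          by_contra h3
          exact v ((h j hjj).mpr h3)
      · rintro (rfl | ⟨u, v⟩)
        · exact ⟨hj, h0⟩
        · have hjj : j ≠ j₀ := fun hh => h0' (by rw [← hh]; exact v)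
          exact ⟨u, fun hz => ((h j hjj).mp hz) v⟩
    have hT2 : (fun j => c - j) '' {j : ℤ | j < 0 ∧ zeroPos q (c - j)} = Zs q (c+1) := by
      ext m
      rw [mem_reflect]
      simp only [Set.mem_setOf_eq, Zs, show c - (c - m) = m by ring]
      constructor <;> rintro ⟨u, v⟩ <;> exact ⟨by omega, v⟩
    have hfinT : ({j : ℤ | j < 0 ∧ zeroPos q (c - j)}).Finite := by
      have : {j : ℤ | j < 0 ∧ zeroPos q (c - j)} = (fun j => c - j) '' Zs q (c+1) := by
        rw [← hT2]
        ext m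
        rw [mem_reflect, mem_reflect]
        constructor <;> intro hh <;> simpa [show c - (c - m) = m by ring] using hh
      rw [this]
      exact (Zs_finite q (c+1)).image _
    have hcount2 : oc q' 0 = zc q (c+1) + 1 := by
      show (Os q' 0).ncard = zc q (c+1) + 1
      rw [hT, Set.ncard_insert_of_notMem (by simp [h0']) hfinT,
        ← reflect_ncard c, hT2, ncard_Zs]
    omega

/-! ### Residue decomposition -/

lemma phi_nonneg (t : ℕ) (ht : 0 < t) (k : ℕ) (hk : k < t) (a j : ℤ) :
    0 ≤ (t:ℤ) * (j + a) + k ↔ -a ≤ j := by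
  have h3 : (k:ℤ) < t := by exact_mod_cast hk
  have h0 : (0:ℤ) ≤ k := by positivity
  constructor
  · intro h
    by_contra hc
    push_neg at hc
    have h1 : j + a ≤ -1 := by omega
    have h2 : (t:ℤ) * (j + a) ≤ (t:ℤ) * (-1) :=
      mul_le_mul_of_nonneg_left h1 (by positivity)
    linarith
  · intro h
    have h2 : 0 ≤ (t:ℤ) * (j + a) := mul_nonneg (by positivity) (by omega)
    linarith

lemma phi_mod (t : ℕ) (ht : 0 < t) (k : ℕ) (hk : k < t) (a j : ℤ) :
    ((t:ℤ) * (j + a) + k) % t = k := by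
  rw [add_comm, Int.add_mul_emod_self_left]
  exact Int.emod_eq_of_lt (by positivity) (by exact_mod_cast hk)

lemma phi_inj (t : ℕ) (ht : 0 < t) (k : ℕ) (a : ℤ) :
    Function.Injective (fun j : ℤ => (t:ℤ) * (j + a) + k) := by
  intro x y hxy
  dsimp at hxy
  have h1 : (t:ℤ) * (x + a) = (t:ℤ) * (y + a) := by omega
  have h2 : x + a = y + a := mul_left_cancel₀ (by positivity) h1
  omega

lemma phi_cover (t : ℕ) (ht : 0 < t) (s : ℕ → ℤ) (m : ℤ) :
    ∃ k, k < t ∧ ∃ j : ℤ, (t:ℤ) * (j + s k) + k = m := by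
  have ht' : (0:ℤ) < t := by exact_mod_cast ht
  have h1 : 0 ≤ m % t := Int.emod_nonneg m (by omega)
  have h2 : m % t < t := Int.emod_lt_of_pos m ht'
  refine ⟨(m % t).toNat, by omega, m / t - s (m % t).toNat, ?_⟩
  have hc : (((m % (t:ℤ)).toNat : ℕ) : ℤ) = m % t := Int.toNat_of_nonneg h1
  rw [hc]
  have := Int.mul_ediv_add_emod m t
  ring_nf
  omega

lemma ncard_biUnion {α : Type*} (n : ℕ) (B : ℕ → Set α)
    (hf : ∀ k, k < n → (B k).Finite)
    (hd : ∀ k l, k < n → l < n → k ≠ l → Disjoint (B k) (B l)) :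
    (⋃ k ∈ Finset.range n, B k).ncard = ∑ k ∈ Finset.range n, (B k).ncard := by
  induction n with
  | zero => simp
  | succ n ih =>
    rw [Finset.range_add_one, Finset.sum_insert (by simp), Finset.set_biUnion_insert]
    have hdisj : Disjoint (B n) (⋃ k ∈ Finset.range n, B k) := by
      refine Set.disjoint_left.mpr fun a ha hb => ?_
      simp only [Set.mem_iUnion, Finset.mem_range] at hb
      obtain ⟨k, hk, hak⟩ := hb
      exact Set.disjoint_left.mp (hd n k (by omega) (by omega) (by omega)) ha hak
    rw [Set.ncard_union_eq hdisj (hf n (by omega))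
      (Set.Finite.biUnion (Finset.range n).finite_toSet
        (fun k hk => hf k (by simp only [Finset.mem_coe, Finset.mem_range] at hk; omega)))]
    rw [ih (fun k hk => hf k (by omega)) (fun k l hk hl => hd k l (by omega) (by omega))]

lemma pow_neg_one_congr {a b : ℕ} (h : a % 2 = b % 2) : ((-1:ℤ))^a = (-1)^b := by
  rcases Nat.even_or_odd a with ha | ha
  · have hb : Even b := by rw [Nat.even_iff] at *; omega
    rw [Even.neg_one_pow ha, Even.neg_one_pow hb]
  · have hb : Odd b := by rw [Nat.odd_iff] at *; omega
    rw [Odd.neg_one_pow ha, Odd.neg_one_pow hb]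

end LWAux
open LWAux in
theorem littlewood_delta_multiplicative (t' : ℕ) (lam core : IntPartition)
    (quot : ℕ → IntPartition) (hl : lam.IsDoubledDistinct)
    (hL : IsLittlewood (2 * t' + 1) lam core quot) :
    lam.delta = core.delta * (quot 0).delta := by
  obtain ⟨s, h1, h2⟩ := hL
  set T : ℕ := 2 * t' + 1 with hTdef
  have hT : 0 < T := by omega
  have hTz : (0:ℤ) < (T:ℤ) := by exact_mod_cast hT
  have hz0 : ¬ zeroPos lam 0 := dd_not_zero lam hl
  have hsym : ∀ m : ℤ, m ≠ 0 → (zeroPos lam m ↔ ¬ zeroPos lam (-m)) := dd_symm lam hl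
  -- the complementation relation between quotient components k and T - k
  have hrel : ∀ k, 1 ≤ k → k < T → ∀ j' : ℤ,
      zeroPos (quot (T - k)) j' ↔ ¬ zeroPos (quot k) ((-1 - s k - s (T - k)) - j') := by
    intro k hk1 hk2 j'
    rw [h1 (T - k) (by omega) j']
    have hne : (T:ℤ) * (j' + s (T - k)) + ((T - k : ℕ):ℤ) ≠ 0 := by
      intro hzero
      have hm := phi_mod T hT (T - k) (by omega) (s (T - k)) j'
      rw [hzero] at hm
      simp only [Int.zero_emod] at hm
      have hm2 : ((T - k : ℕ):ℤ) = 0 := hm.symm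
      have hm3 : (T - k : ℕ) = 0 := by exact_mod_cast hm2
      omega
    rw [hsym _ hne, not_iff_not, h1 k (by omega) ((-1 - s k - s (T - k)) - j')]
    have hcast : ((T - k : ℕ):ℤ) = (T:ℤ) - (k:ℤ) := by
      push_cast [Nat.cast_sub hk2.le]
      ring
    have harg : (T:ℤ) * ((((-1 - s k - s (T - k)) - j')) + s k) + (k:ℤ)
        = -((T:ℤ) * (j' + s (T - k)) + ((T - k : ℕ):ℤ)) := by
      rw [hcast]; ring
    rw [harg]
  -- the shifts pair up to zero
  have hsb : ∀ k, 1 ≤ k → k < T → s (T - k) = -(s k) := by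
    intro k hk1 hk2
    have := shift_eq (quot k) (quot (T - k)) (-1 - s k - s (T - k)) (hrel k hk1 hk2)
    omega
  -- the middle shift is zero
  have hs0 : s 0 = 0 := by
    have hx : ∀ j : ℤ, j ≠ -(s 0) →
        (zeroPos (quot 0) j ↔ ¬ zeroPos (quot 0) ((-(2 * s 0)) - j)) := by
      intro j hj
      rw [h1 0 hT j]
      have hne : (T:ℤ) * (j + s 0) + ((0:ℕ):ℤ) ≠ 0 := by
        intro hzero
        have h3 : (T:ℤ) * (j + s 0) = 0 := by
          rw [Nat.cast_zero, add_zero] at hzero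
          exact hzero
        rcases mul_eq_zero.mp h3 with h4 | h4
        · omega
        · omega
      rw [hsym _ hne, not_iff_not, h1 0 hT ((-(2 * s 0)) - j)]
      have harg : (T:ℤ) * (((-(2 * s 0)) - j) + s 0) + ((0:ℕ):ℤ)
          = -((T:ℤ) * (j + s 0) + ((0:ℕ):ℤ)) := by rw [Nat.cast_zero]; ring
      rw [harg]
    have hx0 : ¬ zeroPos (quot 0) (-(s 0)) := by
      rw [h1 0 hT (-(s 0))]
      have e : (T:ℤ) * ((-(s 0)) + s 0) + ((0:ℕ):ℤ) = 0 := by rw [Nat.cast_zero]; ring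
      rw [e]
      exact hz0
    have hx0' : ¬ zeroPos (quot 0) ((-(2 * s 0)) - (-(s 0))) := by
      rw [show (-(2 * s 0)) - (-(s 0)) = -(s 0) by ring]
      exact hx0
    have := shift_eq' (quot 0) (quot 0) (-(2 * s 0)) (-(s 0)) hx hx0 hx0'
    omega
  -- pairing of counts between components k and T - k
  have hpair : ∀ k, 1 ≤ k → k < T →
      (zc (quot (T - k)) (s k) : ℤ) = (zc (quot k) (-(s k)) : ℤ) - s k := by
    intro k hk1 hk2
    have hrel' : ∀ j' : ℤ, zeroPos (quot (T - k)) j' ↔ ¬ zeroPos (quot k) (-1 - j') := by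
      intro j'
      have hh := hrel k hk1 hk2 j'
      rw [hsb k hk1 hk2] at hh
      rwa [show (-1 - s k - -(s k)) - j' = -1 - j' by ring] at hh
    have himg : (fun j => (-1:ℤ) - j) '' Zs (quot (T - k)) (s k) = Os (quot k) (-(s k)) := by
      ext m
      rw [mem_reflect]
      simp only [Zs, Os, Set.mem_setOf_eq]
      rw [hrel' (-1 - m), show (-1:ℤ) - (-1 - m) = m by ring]
      constructor <;> rintro ⟨u, v⟩ <;> exact ⟨by omega, v⟩
    have hcount : zc (quot (T - k)) (s k) = oc (quot k) (-(s k)) := by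
      rw [show oc (quot k) (-(s k)) = (Os (quot k) (-(s k))).ncard from rfl,
        ← himg, reflect_ncard, ncard_Zs]
    have := charge (quot k) (-(s k))
    omega
  -- generic disjointness of the residue classes
  have hdisj : ∀ (B : ℕ → Set ℤ) (k l : ℕ), k < T → l < T → k ≠ l →
      Disjoint ((fun j => (T:ℤ) * (j + s k) + (k:ℤ)) '' B k)
        ((fun j => (T:ℤ) * (j + s l) + (l:ℤ)) '' B l) := by
    intro B k l hk hl hkl
    rw [Set.disjoint_left]
    rintro m ⟨j, _, rfl⟩ ⟨j', _, he⟩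
    have he' : (T:ℤ) * (j' + s l) + (l:ℤ) = (T:ℤ) * (j + s k) + (k:ℤ) := he
    have e1 := phi_mod T hT k hk (s k) j
    have e2 := phi_mod T hT l hl (s l) j'
    rw [he', e1] at e2
    exact hkl (by exact_mod_cast e2)
  -- decomposition of the zero positions of lam
  have hUnionL : Zs lam 0 = ⋃ k ∈ Finset.range T,
      (fun j => (T:ℤ) * (j + s k) + (k:ℤ)) '' Zs (quot k) (-(s k)) := by
    ext m
    simp only [Set.mem_iUnion, Finset.mem_range, Set.mem_image, Zs, Set.mem_setOf_eq,
      exists_prop]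
    constructor
    · rintro ⟨hm0, hmz⟩
      obtain ⟨k, hk, j, hj⟩ := phi_cover T hT s m
      refine ⟨k, hk, j, ⟨?_, ?_⟩, hj⟩
      · rw [← phi_nonneg T hT k hk (s k) j, hj]; exact hm0
      · rw [h1 k hk j, hj]; exact hmz
    · rintro ⟨k, hk, j, ⟨hj1, hj2⟩, rfl⟩
      exact ⟨(phi_nonneg T hT k hk (s k) j).mpr hj1, (h1 k hk j).mp hj2⟩
  -- decomposition of the zero positions of core
  have hUnionC : Zs core 0 = ⋃ k ∈ Finset.range T,
      (fun j => (T:ℤ) * (j + s k) + (k:ℤ)) '' Set.Ico (-(s k)) (0:ℤ) := by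
    ext m
    simp only [Set.mem_iUnion, Finset.mem_range, Set.mem_image, Zs, Set.mem_setOf_eq,
      Set.mem_Ico, exists_prop]
    constructor
    · rintro ⟨hm0, hmz⟩
      obtain ⟨k, hk, j, hj⟩ := phi_cover T hT s m
      refine ⟨k, hk, j, ⟨?_, ?_⟩, hj⟩
      · rw [← phi_nonneg T hT k hk (s k) j, hj]; exact hm0
      · rw [← h2 k hk j, hj]; exact hmz
    · rintro ⟨k, hk, j, ⟨hj1, hj2⟩, rfl⟩
      exact ⟨(phi_nonneg T hT k hk (s k) j).mpr hj1, (h2 k hk j).mpr hj2⟩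
  have hlamsum : zc lam 0 = ∑ k ∈ Finset.range T, zc (quot k) (-(s k)) := by
    rw [← ncard_Zs, hUnionL, ncard_biUnion T _
      (fun k hk => (Zs_finite (quot k) (-(s k))).image _)
      (fun k l hk hl hkl => hdisj (fun k => Zs (quot k) (-(s k))) k l hk hl hkl)]
    apply Finset.sum_congr rfl
    intro k hk
    rw [Set.ncard_image_of_injective _ (phi_inj T hT k (s k)), ncard_Zs]
  have hcoresum : zc core 0 = ∑ k ∈ Finset.range T, (s k).toNat := by
    rw [← ncard_Zs, hUnionC, ncard_biUnion T _
      (fun k hk => (Set.finite_Ico _ _).image _)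
      (fun k l hk hl hkl => hdisj (fun k => Set.Ico (-(s k)) (0:ℤ)) k l hk hl hkl)]
    apply Finset.sum_congr rfl
    intro k hk
    rw [Set.ncard_image_of_injective _ (phi_inj T hT k (s k)),
      ← Finset.coe_Ico, Set.ncard_coe_finset, Int.card_Ico]
    omega
  -- symmetry of the summands
  have hHsymm : ∀ k, 1 ≤ k → k < T →
      (zc (quot (T - k)) (-(s (T - k))) : ℤ) - ((s (T - k)).toNat : ℤ)
        = (zc (quot k) (-(s k)) : ℤ) - ((s k).toNat : ℤ) := by
    intro k hk1 hk2
    have hp := hpair k hk1 hk2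
    rw [hsb k hk1 hk2, neg_neg]
    omega
  have hswap : ∑ k ∈ Finset.Ico (t'+1) T, ((zc (quot k) (-(s k)) : ℤ) - ((s k).toNat : ℤ))
      = ∑ k ∈ Finset.Ico 1 (t'+1), ((zc (quot k) (-(s k)) : ℤ) - ((s k).toNat : ℤ)) := by
    apply Finset.sum_nbij' (i := fun k => T - k) (j := fun k => T - k)
    · intro a ha
      simp only [Finset.mem_Ico] at ha ⊢
      omega
    · intro a ha
      simp only [Finset.mem_Ico] at ha ⊢
      omega
    · intro a ha
      simp only [Finset.mem_Ico] at ha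
      omega
    · intro a ha
      simp only [Finset.mem_Ico] at ha
      omega
    · intro a ha
      simp only [Finset.mem_Ico] at ha
      have := hHsymm (T - a) (by omega) (by omega)
      rw [show T - (T - a) = a by omega] at this
      exact this
  have hIcoSum : ∑ k ∈ Finset.Ico 1 T, ((zc (quot k) (-(s k)) : ℤ) - ((s k).toNat : ℤ))
      = 2 * ∑ k ∈ Finset.Ico 1 (t'+1), ((zc (quot k) (-(s k)) : ℤ) - ((s k).toNat : ℤ)) := by
    rw [← Finset.Ico_union_Ico_eq_Ico (show (1:ℕ) ≤ t'+1 by omega) (show t'+1 ≤ T by omega),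
      Finset.sum_union (Finset.Ico_disjoint_Ico_consecutive 1 (t'+1) T), hswap]
    ring
  have hrange : Finset.range T = insert 0 (Finset.Ico 1 T) := by
    ext x
    simp only [Finset.mem_range, Finset.mem_insert, Finset.mem_Ico]
    omega
  have e0 : (zc (quot 0) (-(s 0)) : ℤ) - ((s 0).toNat : ℤ) = (zc (quot 0) 0 : ℤ) := by
    rw [hs0]
    simp
  have hH : ∑ k ∈ Finset.range T, ((zc (quot k) (-(s k)) : ℤ) - ((s k).toNat : ℤ))
      = (zc (quot 0) 0 : ℤ)
        + 2 * ∑ k ∈ Finset.Ico 1 (t'+1), ((zc (quot k) (-(s k)) : ℤ) - ((s k).toNat : ℤ)) := by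
    rw [hrange, Finset.sum_insert (by simp), e0, hIcoSum]
  have hkey : (∑ k ∈ Finset.range T, (zc (quot k) (-(s k)) : ℤ))
      = (∑ k ∈ Finset.range T, ((s k).toNat : ℤ)) + (zc (quot 0) 0 : ℤ)
        + 2 * ∑ k ∈ Finset.Ico 1 (t'+1), ((zc (quot k) (-(s k)) : ℤ) - ((s k).toNat : ℤ)) := by
    have hsplit : (∑ k ∈ Finset.range T, (zc (quot k) (-(s k)) : ℤ))
        = (∑ k ∈ Finset.range T, ((s k).toNat : ℤ))
          + ∑ k ∈ Finset.range T, ((zc (quot k) (-(s k)) : ℤ) - ((s k).toNat : ℤ)) := by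
      rw [← Finset.sum_add_distrib]
      apply Finset.sum_congr rfl
      intro k _
      ring
    rw [hsplit, hH]
    ring
  -- conclusion
  simp only [IntPartition.delta]
  rw [durfee_eq_zc lam, durfee_eq_zc core, durfee_eq_zc (quot 0), hlamsum, hcoresum,
    ← pow_add]
  apply pow_neg_one_congr
  have hc1 : ((∑ k ∈ Finset.range T, zc (quot k) (-(s k)) : ℕ) : ℤ)
      = ∑ k ∈ Finset.range T, (zc (quot k) (-(s k)) : ℤ) := by push_cast; rfl
  have hc2 : ((∑ k ∈ Finset.range T, (s k).toNat : ℕ) : ℤ)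
      = ∑ k ∈ Finset.range T, ((s k).toNat : ℤ) := by push_cast; rfl
  omega
end
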